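/- Suppose T is in case 1 (k < 0 and M < m) and let I_h(t) = a·e^{kt} + (b_m + b_M)/2. Then every index i with ‖T − I_h(𝔱)‖_∞ = −(T_i − I_h(t_i)) satisfies t_i ≤ t_m, and every index i with ‖T − I_h(𝔱)‖_∞ = T_i − I_h(t_i) satisfies t_i ≥ t_M. -/
import Mathlib


/-- In case 1 (`k < 0` and `M < m`), with `a ≠ a_{mM}`, every index
`i` where the max-norm error of `I_h(t) = a·e^{kt} + (b_m + b_M)/2` is attained
as `‖T − I_h(𝔱)‖_∞ = −(T_i − I_h(t_i))` satisfies `t_i ≤ t_m`, and every index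
`i` where it is attained as `‖T − I_h(𝔱)‖_∞ = T_i − I_h(t_i)` satisfies
`t_i ≥ t_M`. -/
theorem case1_critical_points_location {n : ℕ}
    (t : Fin n → ℝ) (ht : StrictMono t) (T : Fin n → ℝ)
    (k : ℝ) (hk : k < 0)
    (m M : Fin n)
    (hm_min : ∀ i, T m ≤ T i) (hm_first : ∀ i, T i = T m → m ≤ i)
    (hM_max : ∀ i, T i ≤ T M) (hM_last : ∀ i, T i = T M → i ≤ M)
    (hMm : M < m)
    (a : ℝ)
    (ha_mem :
      (∃ i, i < m ∧ a = (T i - T m) / (Real.exp (k * t i) - Real.exp (k * t m))) ∨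
      (∃ j, M < j ∧ a = (T j - T M) / (Real.exp (k * t j) - Real.exp (k * t M))))
    (ha_min :
      (∀ i, i < m → a ≤ (T i - T m) / (Real.exp (k * t i) - Real.exp (k * t m))) ∧
      (∀ j, M < j → a ≤ (T j - T M) / (Real.exp (k * t j) - Real.exp (k * t M))))
    (hane : a ≠ (T m - T M) / (Real.exp (k * t m) - Real.exp (k * t M)))
    (bm bM : ℝ)
    (hbm : bm = T m - a * Real.exp (k * t m))
    (hbM : bM = T M - a * Real.exp (k * t M)) :
    ∀ i : Fin n,
      (‖T - (fun l => a * Real.exp (k * t l) + (bm + bM) / 2)‖ =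
          -(T i - (a * Real.exp (k * t i) + (bm + bM) / 2)) → t i ≤ t m) ∧
      (‖T - (fun l => a * Real.exp (k * t l) + (bm + bM) / 2)‖ =
          T i - (a * Real.exp (k * t i) + (bm + bM) / 2) → t M ≤ t i) := by
  -- exp monotonicity: p < q ⇒ exp (k t q) < exp (k t p)
  have hexp : ∀ p q : Fin n, p < q → Real.exp (k * t q) < Real.exp (k * t p) := by
    intro p q hpq
    have := ht hpq
    exact Real.exp_lt_exp.2 (by nlinarith)
  -- a > 0
  have ha_pos : 0 < a := by
    rcases ha_mem with ⟨i, him, hai⟩ | ⟨j, hjM, haj⟩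
    · have hd : 0 < Real.exp (k * t i) - Real.exp (k * t m) := by
        have := hexp i m him; linarith
      have hnum : 0 < T i - T m := by
        rcases lt_or_eq_of_le (hm_min i) with h | h
        · linarith
        · exact absurd (hm_first i h.symm) (not_le.2 him)
      rw [hai]; exact div_pos hnum hd
    · have hd : Real.exp (k * t j) - Real.exp (k * t M) < 0 := by
        have := hexp M j hjM; linarith
      have hnum : T j - T M < 0 := by
        rcases lt_or_eq_of_le (hM_max j) with h | h
        · linarith
        · exact absurd (hM_last j h) (not_le.2 hjM)
      rw [haj]; exact div_pos_of_neg_of_neg hnum hd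
  -- bm < bM
  have hbmM : bm < bM := by
    have h1 : a ≤ (T m - T M) / (Real.exp (k * t m) - Real.exp (k * t M)) :=
      ha_min.2 m hMm
    have h2 : a < (T m - T M) / (Real.exp (k * t m) - Real.exp (k * t M)) :=
      lt_of_le_of_ne h1 hane
    have hd : Real.exp (k * t m) - Real.exp (k * t M) < 0 := by
      have := hexp M m hMm; linarith
    have h3 : T m - T M < a * (Real.exp (k * t m) - Real.exp (k * t M)) :=
      (lt_div_iff_of_neg hd).1 h2
    rw [hbm, hbM]; nlinarith
  -- strict lower bound for indices past m
  have hlow : ∀ j : Fin n, m < j → bm < T j - a * Real.exp (k * t j) := by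
    intro j hmj
    have h1 := hm_min j
    have h2 := hexp m j hmj
    rw [hbm]; nlinarith
  -- strict upper bound for indices before M
  have hhigh : ∀ j : Fin n, j < M → T j - a * Real.exp (k * t j) < bM := by
    intro j hjM
    have h1 := hM_max j
    have h2 := hexp j M hjM
    rw [hbM]; nlinarith
  intro i
  set f : Fin n → ℝ := T - (fun l => a * Real.exp (k * t l) + (bm + bM) / 2) with hf
  have hfa : ∀ l, f l = T l - (a * Real.exp (k * t l) + (bm + bM) / 2) := by
    intro l; simp [hf]
  have hfm : f m = (bm - bM) / 2 := by rw [hfa, hbm]; ring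
  have hfM : f M = (bM - bm) / 2 := by rw [hfa, hbM]; ring
  have hnm : |f m| ≤ ‖f‖ := norm_le_pi_norm f m
  have habsm : |f m| = (bM - bm) / 2 := by
    rw [hfm, abs_of_neg (by linarith)]; ring
  constructor
  · intro h
    by_contra hcon
    push_neg at hcon
    have hmi : m < i := (ht.lt_iff_lt).1 hcon
    have h1 := hlow i hmi
    have h2 : -(f i) < (bM - bm) / 2 := by rw [hfa]; linarith
    rw [h] at hnm
    linarith
  · intro h
    by_contra hcon
    push_neg at hcon
    have hiM : i < M := (ht.lt_iff_lt).1 hcon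
    have h1 := hhigh i hiM
    have h2 : f i < (bM - bm) / 2 := by rw [hfa]; linarith
    rw [h] at hnm
    linarith
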